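/- Let K/F be a cyclic field extension with Gal(K/F) = ⟨σ⟩ of order n, R = K[t;σ], and f ∈ R monic irreducible of degree m > 1 with gcrd(f,t) = 1 and minimal central left multiple h(t) = ĥ(tⁿ) of degree km, with B = Nuc_r(S_f) and Ψ: R/Rh ≅ M_k(B), Ψ(a + Rh) = M_a. Then for all a + Rh ∈ R/Rh: dim_B(im(L_{M_a})) = k² − (k/m)·deg(gcrd(a,h)) and colrank(M_a) = k − (1/m)·deg(gcrd(a,h)). In particular, if deg(h) = mn then M_a ∈ M_n(E_ĥ) and rank(M_a) = n − (1/m)·deg(gcrd(a,h)). -/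

import Mathlib

namespace SkewPaper

/-- Data presenting a ring `R` as a skew polynomial ring `D[t;σ]` over a division ring `D`:
`ι` embeds `D`, `t` is the variable, `t * ι a = ι (σ a) * t`, and every element of `R`
is uniquely a finite sum `∑ ι (coeff f i) * t^i`. -/
structure SkewPolyData (D R : Type*) [DivisionRing D] [Ring R] where
  σ : D ≃+* D
  ι : D →+* R
  t : R
  coeff : R → ℕ → D
  twist : ∀ a : D, t * ι a = ι (σ a) * t
  support_finite : ∀ f : R, (Function.support (coeff f)).Finite
  coeff_ext : ∀ f g : R, (∀ i, coeff f i = coeff g i) → f = g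
  coeff_sum : ∀ (c : ℕ →₀ D) (i : ℕ),
    coeff (∑ j ∈ c.support, ι (c j) * t ^ j) i = c i

/-- Two elements are similar if the left modules `R/Rf` and `R/Rg` are isomorphic. -/
def Sim {R : Type*} [Ring R] (f g : R) : Prop :=
  Nonempty ((R ⧸ Submodule.span R {f}) ≃ₗ[R] (R ⧸ Submodule.span R {g}))

/-- `g` divides `f` on the right. -/
def RDvd {R : Type*} [Ring R] (g f : R) : Prop := ∃ q, f = q * g

/-- `g` divides `f` on the left. -/
def LDvd {R : Type*} [Ring R] (g f : R) : Prop := ∃ q, f = g * q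

/-- `Rf` is a two-sided ideal. -/
def RightInvariant {R : Type*} [Ring R] (f : R) : Prop := ∀ r : R, ∃ q, f * r = q * f

/-- `g` is a greatest common right divisor of `a` and `h`. -/
def IsGcrd {R : Type*} [Ring R] (a h g : R) : Prop :=
  RDvd g a ∧ RDvd g h ∧ ∀ g' : R, RDvd g' a → RDvd g' h → RDvd g' g

namespace SkewPolyData

variable {D R : Type*} [DivisionRing D] [Ring R] (S : SkewPolyData D R)

/-- The degree of a skew polynomial (`deg 0 = 0` by convention of `sSup ∅`). -/
noncomputable def deg (f : R) : ℕ := sSup {i | S.coeff f i ≠ 0}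

def Monic (f : R) : Prop := S.coeff f (S.deg f) = 1

/-- constant term -/
def const (f : R) : D := S.coeff f 0

/-- `f` is irreducible: it is not a unit and has no proper factorization. -/
def Irred (f : R) : Prop :=
  ¬ IsUnit f ∧ ¬ ∃ g p : R, 1 ≤ S.deg g ∧ S.deg g < S.deg f ∧
      1 ≤ S.deg p ∧ S.deg p < S.deg f ∧ f = g * p

/-- `f` has a proper factorization. -/
def Reducible (f : R) : Prop :=
  ∃ g p : R, 1 ≤ S.deg g ∧ S.deg g < S.deg f ∧
      1 ≤ S.deg p ∧ S.deg p < S.deg f ∧ f = g * p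

/-- `gcrd(f,t) = 1`: every common right divisor of `f` and `t` is a (degree-0) unit. -/
def CoprimeT (f : R) : Prop := ∀ g : R, RDvd g f → RDvd g S.t → S.deg g = 0

/-- `F = C ∩ Fix(σ)` as a subset of `D`. -/
def Fset : Set D := {a | a ∈ Subring.center D ∧ S.σ a = a}

/-- `σ` has order `n` modulo inner automorphisms, with `σ^n = i_u`, `u` fixed by `σ`. -/
def OrderModInner (n : ℕ) (u : D) : Prop :=
  0 < n ∧ u ≠ 0 ∧ S.σ u = u ∧ (∀ z : D, (⇑S.σ)^[n] z = u * z * u⁻¹) ∧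
  ∀ j : ℕ, 0 < j → j < n → ¬ ∃ w : D, w ≠ 0 ∧ ∀ z : D, (⇑S.σ)^[j] z = w * z * w⁻¹

/-- Evaluation of a commutative polynomial with coefficients in (the image of) `F`
at an element `x` of `R`. -/
noncomputable def evalAt {F : Type*} [Field F] (ιF : F →+* D) (p : Polynomial F) (x : R) : R :=
  p.sum fun i a => S.ι (ιF a) * x ^ i

/-- `h` is the minimal central left multiple of `f`, with `h = ĥ(u⁻¹ tⁿ)` for a monic `ĥ ∈ F[x]`. -/
def IsMclm (n : ℕ) (u : D) {F : Type*} [Field F] (ιF : F →+* D)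
    (f h : R) (hh : Polynomial F) : Prop :=
  h ∈ Subring.center R ∧ hh.Monic ∧
  h = S.evalAt ιF hh (S.ι u⁻¹ * S.t ^ n) ∧ (∃ g, h = g * f) ∧
  ∀ (h' : R) (hh' : Polynomial F), hh' ≠ 0 →
    h' = S.evalAt ιF hh' (S.ι u⁻¹ * S.t ^ n) → (∃ g, h' = g * f) → S.deg h ≤ S.deg h'

/-- `h` factors into `k` irreducible elements of `R`. -/
def FactorsIntoIrred (h : R) (k : ℕ) : Prop :=
  ∃ fs : Fin k → R, (∀ i, S.Irred (fs i)) ∧ h = (List.ofFn fs).prod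

/-- `modr g f` is the remainder of `g` under right division by `f`. -/
def IsModR (modr : R → R → R) : Prop :=
  ∀ g f : R, 1 ≤ S.deg f →
    (∃ q, g = q * f + modr g f) ∧ (modr g f = 0 ∨ S.deg (modr g f) < S.deg f)

/-- The set `A = { d₀ + d₁ t + ⋯ + d_{lm-1} t^{lm-1} + ν ρ(d₀) t^{lm} }`. -/
def ASet (ν : D) (ρ : D ≃+* D) (lm : ℕ) : Set R :=
  {x | ∃ b : R, S.deg b < lm ∧ x = b + S.ι (ν * ρ (S.const b)) * S.t ^ lm}

/-- The twisted multiplication `b ∘ c = (b + ν ρ(b₀) t^{lm}) c  mod_r f`. -/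
def circ (modr : R → R → R) (f : R) (ν : D) (ρ : D ≃+* D) (lm : ℕ) (b c : R) : R :=
  modr ((b + S.ι (ν * ρ (S.const b)) * S.t ^ lm) * c) f

/-- All coefficients of `p` lie in the subfield (image of) `E`. -/
def CoeffsIn {E : Type*} [Field E] (ιE : E →+* D) (p : R) : Prop := ∀ i, ∃ e, ιE e = S.coeff p i

end SkewPolyData

/-- `D` has dimension `d2` over its center. -/
def CentralDim (D : Type*) [DivisionRing D] (d2 : ℕ) : Prop :=
  ∃ bas : Fin d2 → D,
    (∀ x : D, ∃ c : Fin d2 → D, (∀ i, c i ∈ Subring.center D) ∧ x = ∑ i, c i * bas i) ∧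
    (∀ c : Fin d2 → D, (∀ i, c i ∈ Subring.center D) → ∑ i, c i * bas i = 0 → ∀ i, c i = 0)

/-- `Fb` is finite-dimensional as a vector space over the subfield `F'` of `D`. -/
def FinDimOver {D : Type*} [DivisionRing D] (F' Fb : Set D) : Prop :=
  ∃ T : Finset D, ↑T ⊆ Fb ∧ ∀ a ∈ Fb, ∃ c : D → D, (∀ x ∈ T, c x ∈ F') ∧ a = ∑ x ∈ T, c x * x

/-- The column rank of a matrix over a division ring: the rank of the right `B`-module
generated by its columns. -/
noncomputable def colrank {k : ℕ} {B : Type*} [DivisionRing B]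
    (M : Matrix (Fin k) (Fin k) B) : ℕ :=
  Module.finrank Bᵐᵒᵖ (Submodule.span Bᵐᵒᵖ (Set.range fun j : Fin k => fun i : Fin k => M i j))

/-- `D` is presented as the cyclic algebra `(E/C, γ, aC)` of degree `d`, with maximal
subfield `E` embedded by `ιE`, `Gal(E/C) = ⟨γ⟩` and a generator `e` with `e^d = aC`. -/
def IsCyclicPresentation {D : Type*} [DivisionRing D] {C E : Type*} [Field C] [Field E]
    [Algebra C E] (ιE : E →+* D) (γ : E ≃ₐ[C] E) (d : ℕ) (e : D) (aC : C) : Prop :=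
  (∀ a : D, a ∈ Subring.center D ↔ ∃ c : C, ιE (algebraMap C E c) = a) ∧
  Module.finrank C E = d ∧
  (∀ τ : E ≃ₐ[C] E, τ ∈ Subgroup.zpowers γ) ∧
  (∀ z : E, e * ιE z = ιE (γ z) * e) ∧
  e ^ d = ιE (algebraMap C E aC) ∧
  (∀ x : D, ∃ c : Fin d → E, x = ∑ i, ιE (c i) * e ^ (i : ℕ))

/-- Multiplication of matrices with entries representing elements of `B = Nuc_r(S_f)`,
where entries multiply via `a ∘ b = ab mod_r f`. -/
def matmulB {R : Type*} [Ring R] (modr : R → R → R) (f : R) {k : ℕ}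
    (M N : Fin k → Fin k → R) : Fin k → Fin k → R :=
  fun i j => ∑ l, modr (M i l * N l j) f

end SkewPaper


namespace SkewPaper

namespace SkewPolyData

variable {D R : Type*} [DivisionRing D] [Ring R] (S : SkewPolyData D R)

lemma iter_mul (i : ℕ) (a b : D) :
    (⇑S.σ)^[i] (a * b) = (⇑S.σ)^[i] a * (⇑S.σ)^[i] b := by
  induction i with
  | zero => simp
  | succ n ih => simp [Function.iterate_succ_apply', ih, map_mul]

@[simp] lemma iter_zero (i : ℕ) : (⇑S.σ)^[i] (0 : D) = 0 := by
  induction i with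
  | zero => simp
  | succ n ih => simp [Function.iterate_succ_apply', ih]

lemma iter_ne_zero {a : D} (ha : a ≠ 0) (i : ℕ) : (⇑S.σ)^[i] a ≠ 0 := by
  induction i with
  | zero => simpa
  | succ n ih =>
    rw [Function.iterate_succ_apply']
    intro hz
    exact ih (by simpa using (S.σ.injective (by simpa using hz)))

lemma coeff_sum' (s : Finset ℕ) (c : ℕ → D) (i : ℕ) :
    S.coeff (∑ j ∈ s, S.ι (c j) * S.t ^ j) i = if i ∈ s then c i else 0 := by
  classical
  set c' : ℕ →₀ D := Finsupp.indicator s (fun j _ => c j) with hc'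
  have hsupp : c'.support ⊆ s := Finsupp.support_indicator_subset _ _
  have happ : ∀ j, c' j = if j ∈ s then c j else 0 := by
    intro j
    by_cases hj : j ∈ s
    · simp [hc', Finsupp.indicator_apply, hj]
    · simp [hc', Finsupp.indicator_apply, hj]
  have hvan : ∀ j ∈ s, j ∉ c'.support → S.ι (c' j) * S.t ^ j = 0 := by
    intro j _ hnj
    have h0 : c' j = 0 := Finsupp.notMem_support_iff.mp hnj
    rw [h0, map_zero, zero_mul]
  have hsum : ∑ j ∈ s, S.ι (c j) * S.t ^ j = ∑ j ∈ c'.support, S.ι (c' j) * S.t ^ j := by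
    rw [Finset.sum_subset hsupp hvan]
    apply Finset.sum_congr rfl
    intro j hj
    rw [happ j, if_pos hj]
  rw [hsum, S.coeff_sum c' i, happ i]

@[simp] lemma coeff_zero (i : ℕ) : S.coeff (0 : R) i = 0 := by
  have := S.coeff_sum' (∅ : Finset ℕ) (fun _ => 0) i
  simpa using this

lemma eq_zero_of_coeff (x : R) (hx : ∀ i, S.coeff x i = 0) : x = 0 :=
  S.coeff_ext x 0 (by simpa using hx)

lemma support_le_deg {x : R} {i : ℕ} (h : S.coeff x i ≠ 0) : i ≤ S.deg x :=
  le_csSup ((S.support_finite x).bddAbove) h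

lemma coeff_eq_zero_of_deg_lt {x : R} {i : ℕ} (h : S.deg x < i) : S.coeff x i = 0 := by
  by_contra hc
  exact absurd (S.support_le_deg hc) (not_le.mpr h)

lemma deg_le_of {x : R} {d : ℕ} (h : ∀ i, d < i → S.coeff x i = 0) : S.deg x ≤ d := by
  by_cases hne : {i | S.coeff x i ≠ 0}.Nonempty
  · exact csSup_le hne (fun i hi => by by_contra hlt; exact hi (h i (not_le.mp hlt)))
  · rw [Set.not_nonempty_iff_eq_empty] at hne
    simp [deg, hne]

lemma lc_ne_zero {x : R} (hx : x ≠ 0) : S.coeff x (S.deg x) ≠ 0 := by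
  have hne : {i | S.coeff x i ≠ 0}.Nonempty := by
    by_contra hc
    rw [Set.not_nonempty_iff_eq_empty] at hc
    exact hx (S.eq_zero_of_coeff x (fun i => by
      by_contra hci
      have : i ∈ {i | S.coeff x i ≠ 0} := hci
      rw [hc] at this
      exact this))
  exact Nat.sSup_mem hne (S.support_finite x).bddAbove

lemma repr' (x : R) (s : Finset ℕ) (hs : ∀ i, S.coeff x i ≠ 0 → i ∈ s) :
    x = ∑ i ∈ s, S.ι (S.coeff x i) * S.t ^ i := by
  apply S.coeff_ext
  intro i
  rw [S.coeff_sum' s (S.coeff x) i]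
  by_cases hi : i ∈ s
  · rw [if_pos hi]
  · rw [if_neg hi]
    by_contra hc
    exact hi (hs i hc)

lemma repr_deg (x : R) : x = ∑ i ∈ Finset.range (S.deg x + 1), S.ι (S.coeff x i) * S.t ^ i :=
  S.repr' x _ (fun i hi => Finset.mem_range.mpr (Nat.lt_succ_of_le (S.support_le_deg hi)))

lemma coeff_add (x y : R) (i : ℕ) : S.coeff (x + y) i = S.coeff x i + S.coeff y i := by
  classical
  set s := Finset.range (S.deg x + 1) ∪ Finset.range (S.deg y + 1) with hs
  have hx : x = ∑ i ∈ s, S.ι (S.coeff x i) * S.t ^ i :=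
    S.repr' x s (fun i hi => Finset.mem_union_left _
      (Finset.mem_range.mpr (Nat.lt_succ_of_le (S.support_le_deg hi))))
  have hy : y = ∑ i ∈ s, S.ι (S.coeff y i) * S.t ^ i :=
    S.repr' y s (fun i hi => Finset.mem_union_right _
      (Finset.mem_range.mpr (Nat.lt_succ_of_le (S.support_le_deg hi))))
  have hxy : x + y = ∑ j ∈ s, S.ι (S.coeff x j + S.coeff y j) * S.t ^ j := by
    conv_lhs => rw [hx, hy]
    rw [← Finset.sum_add_distrib]
    apply Finset.sum_congr rfl
    intro j _
    rw [map_add, add_mul]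
  rw [hxy, S.coeff_sum' s _ i]
  by_cases hi : i ∈ s
  · rw [if_pos hi]
  · rw [if_neg hi]
    have h1 : S.coeff x i = 0 := by
      by_contra hc
      exact hi (Finset.mem_union_left _ (Finset.mem_range.mpr (Nat.lt_succ_of_le (S.support_le_deg hc))))
    have h2 : S.coeff y i = 0 := by
      by_contra hc
      exact hi (Finset.mem_union_right _ (Finset.mem_range.mpr (Nat.lt_succ_of_le (S.support_le_deg hc))))
    rw [h1, h2, add_zero]

lemma coeff_neg (x : R) (i : ℕ) : S.coeff (-x) i = - S.coeff x i := by
  have h := S.coeff_add x (-x) i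
  rw [add_neg_cancel, S.coeff_zero] at h
  exact (neg_eq_of_add_eq_zero_right h.symm).symm

lemma coeff_sub (x y : R) (i : ℕ) : S.coeff (x - y) i = S.coeff x i - S.coeff y i := by
  rw [sub_eq_add_neg, S.coeff_add, S.coeff_neg, sub_eq_add_neg]

lemma t_pow_mul_iota (d : ℕ) (a : D) :
    S.t ^ d * S.ι a = S.ι ((⇑S.σ)^[d] a) * S.t ^ d := by
  induction d generalizing a with
  | zero => simp
  | succ n ih =>
    rw [pow_succ, mul_assoc, S.twist a, ← mul_assoc, ih (S.σ a),
      Function.iterate_succ_apply, mul_assoc, ← pow_succ]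

lemma monomial_mul (a b : D) (d j : ℕ) :
    (S.ι a * S.t ^ d) * (S.ι b * S.t ^ j) = S.ι (a * (⇑S.σ)^[d] b) * S.t ^ (d + j) := by
  rw [mul_assoc, ← mul_assoc (S.t ^ d), S.t_pow_mul_iota d b, mul_assoc, ← pow_add,
    ← mul_assoc, ← map_mul]

lemma coeff_monomial_mul (a : D) (d : ℕ) (y : R) (l : ℕ) :
    S.coeff ((S.ι a * S.t ^ d) * y) l
      = if d ≤ l then a * (⇑S.σ)^[d] (S.coeff y (l - d)) else 0 := by
  classical
  set s := Finset.range (S.deg y + 1) with hs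
  have hy := S.repr_deg y
  have expand : (S.ι a * S.t ^ d) * y
      = ∑ j ∈ s, S.ι (a * (⇑S.σ)^[d] (S.coeff y j)) * S.t ^ (d + j) := by
    conv_lhs => rw [hy]
    rw [Finset.mul_sum]
    exact Finset.sum_congr rfl (fun j _ => S.monomial_mul a (S.coeff y j) d j)
  have emb : Function.Injective (fun j => d + j) := fun u v huv => Nat.add_left_cancel huv
  have expand2 : (S.ι a * S.t ^ d) * y
      = ∑ l ∈ s.map ⟨fun j => d + j, emb⟩, S.ι (a * (⇑S.σ)^[d] (S.coeff y (l - d))) * S.t ^ l := by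
    rw [expand, Finset.sum_map]
    apply Finset.sum_congr rfl
    intro j _
    simp
  rw [expand2, S.coeff_sum']
  by_cases hdl : d ≤ l
  · by_cases hmem : l - d ∈ s
    · rw [if_pos, if_pos hdl]
      simp only [Finset.mem_map, Function.Embedding.coeFn_mk]
      exact ⟨l - d, hmem, by omega⟩
    · rw [if_neg, if_pos hdl]
      · have hz : S.coeff y (l - d) = 0 := by
          apply S.coeff_eq_zero_of_deg_lt
          simp only [hs, Finset.mem_range] at hmem
          omega
        rw [hz, S.iter_zero, mul_zero]
      · simp only [Finset.mem_map, Function.Embedding.coeFn_mk]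
        rintro ⟨j, hj, hjl⟩
        exact hmem (by rw [← hjl]; simpa using hj)
  · rw [if_neg, if_neg hdl]
    simp only [Finset.mem_map, Function.Embedding.coeFn_mk]
    rintro ⟨j, _, rfl⟩
    omega

lemma coeff_finset_sum {ι : Type*} (s : Finset ι) (f : ι → R) (l : ℕ) :
    S.coeff (∑ i ∈ s, f i) l = ∑ i ∈ s, S.coeff (f i) l := by
  classical
  induction s using Finset.induction_on with
  | empty => simp
  | insert _ _ hni ih =>
    rw [Finset.sum_insert hni, Finset.sum_insert hni, S.coeff_add, ih]

lemma coeff_mul (x y : R) (l : ℕ) :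
    S.coeff (x * y) l = ∑ i ∈ Finset.range (S.deg x + 1),
      (if i ≤ l then S.coeff x i * (⇑S.σ)^[i] (S.coeff y (l - i)) else 0) := by
  classical
  have hx := S.repr_deg x
  have expand : x * y = ∑ i ∈ Finset.range (S.deg x + 1), (S.ι (S.coeff x i) * S.t ^ i) * y := by
    conv_lhs => rw [hx]
    rw [Finset.sum_mul]
  rw [expand, S.coeff_finset_sum]
  exact Finset.sum_congr rfl (fun i _ => S.coeff_monomial_mul _ i y l)

lemma coeff_mul_top {x y : R} (hx : x ≠ 0) (hy : y ≠ 0) :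
    S.coeff (x * y) (S.deg x + S.deg y)
      = S.coeff x (S.deg x) * (⇑S.σ)^[S.deg x] (S.coeff y (S.deg y)) := by
  rw [S.coeff_mul]
  rw [Finset.sum_eq_single (S.deg x)]
  · rw [if_pos (by omega)]
    have h : S.deg x + S.deg y - S.deg x = S.deg y := by omega
    rw [h]
  · intro i hi hne
    rw [Finset.mem_range] at hi
    by_cases hil : i ≤ S.deg x + S.deg y
    · rw [if_pos hil]
      have : S.deg y < S.deg x + S.deg y - i := by omega
      rw [S.coeff_eq_zero_of_deg_lt this, S.iter_zero, mul_zero]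
    · rw [if_neg hil]
  · intro hni
    exact absurd (Finset.mem_range.mpr (by omega)) hni

lemma coeff_mul_gt {x y : R} {l : ℕ} (hl : S.deg x + S.deg y < l) :
    S.coeff (x * y) l = 0 := by
  rw [S.coeff_mul]
  apply Finset.sum_eq_zero
  intro i hi
  rw [Finset.mem_range] at hi
  by_cases hil : i ≤ l
  · rw [if_pos hil]
    have : S.deg y < l - i := by omega
    rw [S.coeff_eq_zero_of_deg_lt this, S.iter_zero, mul_zero]
  · rw [if_neg hil]

include S in
lemma mul_ne_zero' {x y : R} (hx : x ≠ 0) (hy : y ≠ 0) : x * y ≠ 0 := by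
  intro hz
  have h := S.coeff_mul_top hx hy
  rw [hz, S.coeff_zero] at h
  exact (mul_ne_zero (S.lc_ne_zero hx) (S.iter_ne_zero (S.lc_ne_zero hy) _)) h.symm

lemma deg_mul {x y : R} (hx : x ≠ 0) (hy : y ≠ 0) :
    S.deg (x * y) = S.deg x + S.deg y := by
  apply le_antisymm
  · exact S.deg_le_of (fun i hi => S.coeff_mul_gt hi)
  · apply S.support_le_deg
    rw [S.coeff_mul_top hx hy]
    exact mul_ne_zero (S.lc_ne_zero hx) (S.iter_ne_zero (S.lc_ne_zero hy) _)

include S in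
lemma mul_cancel_right {z w g : R} (hg : g ≠ 0) (h : z * g = w * g) : z = w := by
  by_contra hne
  have hzw : z - w ≠ 0 := sub_ne_zero_of_ne hne
  have : (z - w) * g = 0 := by rw [sub_mul, h, sub_self]
  exact S.mul_ne_zero' hzw hg this

@[simp] lemma coeff_one (i : ℕ) : S.coeff (1 : R) i = if i = 0 then 1 else 0 := by
  have h1 : (1 : R) = ∑ j ∈ ({0} : Finset ℕ), S.ι ((fun _ => (1:D)) j) * S.t ^ j := by simp
  rw [h1, S.coeff_sum']
  simp

lemma deg_one : S.deg (1 : R) = 0 := S.deg_le_of (fun i hi => by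
  rw [S.coeff_one]; rw [if_neg (by omega)]) |>.antisymm (Nat.zero_le _)

lemma divmod (g : R) (hg : g ≠ 0) :
    ∀ x : R, ∃ q r : R, x = q * g + r ∧ (r = 0 ∨ S.deg r < S.deg g) := by
  suffices H : ∀ d : ℕ, ∀ x : R, S.deg x ≤ d → ∃ q r : R, x = q * g + r ∧ (r = 0 ∨ S.deg r < S.deg g) by
    intro x; exact H (S.deg x) x le_rfl
  intro d
  induction d using Nat.strong_induction_on with
  | _ d ih =>
    intro x hxd
    by_cases hx0 : x = 0
    · exact ⟨0, 0, by simp [hx0], Or.inl rfl⟩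
    by_cases hlt : S.deg x < S.deg g
    · exact ⟨0, x, by simp, Or.inr hlt⟩
    push_neg at hlt
    set e := S.deg x - S.deg g with he
    set a := S.coeff x (S.deg x) * ((⇑S.σ)^[e] (S.coeff g (S.deg g)))⁻¹ with ha
    set x' := x - (S.ι a * S.t ^ e) * g with hx'
    have hcoeff : ∀ l, S.deg x ≤ l → S.coeff x' l = 0 := by
      intro l hl
      rw [hx', S.coeff_sub, S.coeff_monomial_mul]
      rcases eq_or_lt_of_le hl with hleq | hllt
      · rw [if_pos (by omega)]
        have hle : l - e = S.deg g := by omega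
        rw [hle, ha, mul_assoc, inv_mul_cancel₀ (S.iter_ne_zero (S.lc_ne_zero hg) e),
          mul_one, ← hleq, sub_self]
      · rw [S.coeff_eq_zero_of_deg_lt hllt]
        by_cases hel : e ≤ l
        · rw [if_pos hel]
          have : S.deg g < l - e := by omega
          rw [S.coeff_eq_zero_of_deg_lt this, S.iter_zero, mul_zero, sub_self]
        · rw [if_neg hel, sub_self]
    by_cases hx'0 : x' = 0
    · refine ⟨S.ι a * S.t ^ e, 0, ?_, Or.inl rfl⟩
      rw [add_zero]
      have := sub_eq_zero.mp hx'0
      exact this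
    · have hdx' : S.deg x' < S.deg x := by
        rcases Nat.eq_zero_or_pos (S.deg x) with h0 | hpos
        · exact absurd (S.eq_zero_of_coeff x' (fun i => hcoeff i (by omega))) hx'0
        · have hle : S.deg x' ≤ S.deg x := S.deg_le_of (fun i hi => hcoeff i hi.le)
          rcases lt_or_eq_of_le hle with hlt2 | heq
          · exact hlt2
          · exfalso
            have hnz := S.lc_ne_zero hx'0
            rw [heq] at hnz
            exact hnz (hcoeff _ le_rfl)
      have hdlt : S.deg x' < d := lt_of_lt_of_le hdx' hxd
      obtain ⟨q', r, hqr, hr⟩ := ih (S.deg x') hdlt x' le_rfl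
      refine ⟨S.ι a * S.t ^ e + q', r, ?_, hr⟩
      have hx2 : x = (S.ι a * S.t ^ e) * g + x' := by rw [hx']; abel
      rw [hx2, hqr, add_mul, add_assoc]


@[simp] lemma deg_zero : S.deg (0 : R) = 0 := by
  have h0 : {i | S.coeff (0:R) i ≠ 0} = ∅ := by
    ext i; simp
  simp [deg, h0]

include S in
lemma bezout {a h g : R} (hh : h ≠ 0) (hgcrd : IsGcrd a h g) :
    ∃ x y : R, g = x * a + y * h := by
  classical
  set Jset : Set R := {z | ∃ x y : R, z = x * a + y * h} with hJ
  have hJh : h ∈ Jset := ⟨0, 1, by noncomm_ring⟩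
  have hJa : a ∈ Jset := ⟨1, 0, by noncomm_ring⟩
  have hclosed : ∀ z ∈ Jset, ∀ q : R, q * z ∈ Jset := by
    rintro z ⟨x, y, rfl⟩ q
    exact ⟨q * x, q * y, by noncomm_ring⟩
  have hsub : ∀ z ∈ Jset, ∀ w ∈ Jset, z - w ∈ Jset := by
    rintro z ⟨x, y, rfl⟩ w ⟨x', y', rfl⟩
    exact ⟨x - x', y - y', by noncomm_ring⟩
  set dset : Set ℕ := {d | ∃ z ∈ Jset, z ≠ 0 ∧ S.deg z = d} with hd
  have hdne : dset.Nonempty := ⟨S.deg h, h, hJh, hh, rfl⟩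
  obtain ⟨g₀, hg₀J, hg₀ne, hg₀deg⟩ := Nat.sInf_mem hdne
  have hdvd : ∀ z ∈ Jset, RDvd g₀ z := by
    intro z hz
    obtain ⟨q, r, hqr, hr⟩ := S.divmod g₀ hg₀ne z
    rcases hr with hr0 | hrlt
    · exact ⟨q, by rw [hqr, hr0, add_zero]⟩
    · by_cases hrne : r = 0
      · exact ⟨q, by rw [hqr, hrne, add_zero]⟩
      exfalso
      have hrJ : r ∈ Jset := by
        have : r = z - q * g₀ := by rw [hqr]; noncomm_ring
        rw [this]
        exact hsub _ hz _ (hclosed _ hg₀J q)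
      have : S.deg r ∈ dset := ⟨r, hrJ, hrne, rfl⟩
      have := Nat.sInf_le this
      omega
  have hg0g : RDvd g₀ g := hgcrd.2.2 g₀ (hdvd a hJa) (hdvd h hJh)
  obtain ⟨w, hw⟩ := hg0g
  have : g ∈ Jset := by
    rw [hw]
    exact hclosed _ hg₀J w
  obtain ⟨x, y, hxy⟩ := this
  exact ⟨x, y, hxy⟩

include S in
lemma low_coeffs_zero {N : ℕ} {c' : ℕ → D} {cc w : R} (hw : w ≠ 0) (hNw : N ≤ S.deg w)
    (heq : (∑ j ∈ Finset.range N, S.ι (c' j) * S.t ^ j) = cc * w) :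
    ∀ j < N, c' j = 0 := by
  have hcc : cc = 0 := by
    by_contra hcc
    have hzne : cc * w ≠ 0 := S.mul_ne_zero' hcc hw
    have hdeg : S.deg (cc * w) = S.deg cc + S.deg w := S.deg_mul hcc hw
    have htop : S.coeff (cc * w) (S.deg (cc * w)) ≠ 0 := S.lc_ne_zero hzne
    rw [hdeg, ← heq, S.coeff_sum'] at htop
    rw [if_neg (by rw [Finset.mem_range]; omega)] at htop
    exact htop rfl
  rw [hcc, zero_mul] at heq
  intro j hj
  have := S.coeff_sum' (Finset.range N) c' j
  rw [heq, S.coeff_zero] at this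
  rw [if_pos (Finset.mem_range.mpr hj)] at this
  exact this.symm

end SkewPolyData

end SkewPaper

open Module MulOpposite

section MatrixRank

variable {B : Type*} [DivisionRing B] {k : ℕ}

/-- `B` is a finite `Bᵐᵒᵖ`-module. -/
lemma finite_op : Module.Finite Bᵐᵒᵖ B := by
  refine ⟨⟨{1}, ?_⟩⟩
  rw [eq_top_iff]
  intro x _
  have : x = (op x) • (1 : B) := by simp [op_smul_eq_mul]
  rw [this]
  exact Submodule.smul_mem _ _ (Submodule.subset_span (by simp))

/-- `B ≃ₗ[Bᵐᵒᵖ] Bᵐᵒᵖ`. -/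
noncomputable def opEquiv : B ≃ₗ[Bᵐᵒᵖ] Bᵐᵒᵖ where
  toFun := op
  invFun := unop
  left_inv := fun x => rfl
  right_inv := fun x => rfl
  map_add' := fun x y => rfl
  map_smul' := fun c x => by
    obtain ⟨u, rfl⟩ : ∃ u, c = op u := ⟨unop c, rfl⟩
    simp only [RingHom.id_apply]
    rw [op_smul_eq_mul, smul_eq_mul, ← op_mul]

lemma finrank_op_fun (n : ℕ) : finrank Bᵐᵒᵖ (Fin n → B) = n := by
  have e : (Fin n → B) ≃ₗ[Bᵐᵒᵖ] (Fin n → Bᵐᵒᵖ) :=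
    LinearEquiv.piCongrRight (fun _ => opEquiv)
  rw [e.finrank_eq, finrank_pi]
  simp

lemma finrank_op_fun2 (n l : ℕ) : finrank Bᵐᵒᵖ (Fin n → Fin l → B) = n * l := by
  have e : (Fin n → Fin l → B) ≃ₗ[Bᵐᵒᵖ] (Fin n → Fin l → Bᵐᵒᵖ) :=
    LinearEquiv.piCongrRight (fun _ => LinearEquiv.piCongrRight (fun _ => opEquiv))
  rw [e.finrank_eq, finrank_pi_fintype]
  simp [finrank_pi]

lemma finrank_fun (n : ℕ) : finrank B (Fin n → B) = n := by
  rw [finrank_pi]; simp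

/-- span of the range of a finite family has finrank at most the size of the family. -/
lemma finrank_span_range_le {R W : Type*} [DivisionRing R] [AddCommGroup W] [Module R W]
    {r : ℕ} (v : Fin r → W) :
    finrank R (Submodule.span R (Set.range v)) ≤ r := by
  classical
  let L : (Fin r → R) →ₗ[R] W :=
    { toFun := fun c => ∑ i, c i • v i
      map_add' := by intro c d; simp [add_smul, Finset.sum_add_distrib]
      map_smul' := by intro c d; simp [mul_smul, Finset.smul_sum]
    }
  have hrange : LinearMap.range L = Submodule.span R (Set.range v) := by
    ext x
    rw [LinearMap.mem_range, Submodule.mem_span_range_iff_exists_fun]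
    constructor
    · rintro ⟨c, rfl⟩; exact ⟨c, rfl⟩
    · rintro ⟨c, rfl⟩; exact ⟨c, rfl⟩
  rw [← hrange]
  have := LinearMap.finrank_range_le L
  rwa [finrank_pi, Fintype.card_fin] at this

/-- also FiniteDimensional -/
lemma fd_span_range {R W : Type*} [DivisionRing R] [AddCommGroup W] [Module R W]
    {r : ℕ} (v : Fin r → W) :
    FiniteDimensional R (Submodule.span R (Set.range v)) :=
  FiniteDimensional.span_of_finite R (Set.finite_range v)

variable (M : Matrix (Fin k) (Fin k) B)

/-- row space (left B-span of rows) -/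
noncomputable def rowSpace : Submodule B (Fin k → B) :=
  Submodule.span B (Set.range fun i => M i)

/-- column space (right B-span = Bᵐᵒᵖ-span of columns) -/
noncomputable def colSpace : Submodule Bᵐᵒᵖ (Fin k → B) :=
  Submodule.span Bᵐᵒᵖ (Set.range fun j => fun i => M i j)

/-- from a factorization `M = C * W` with inner size `r`, bound both ranks. -/
lemma colSpace_rank_le_of_factor {r : ℕ} (C : Matrix (Fin k) (Fin r) B)
    (W : Matrix (Fin r) (Fin k) B) (hM : M = C * W) :
    finrank Bᵐᵒᵖ (colSpace M) ≤ r := by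
  classical
  have hle : colSpace M ≤ Submodule.span Bᵐᵒᵖ (Set.range fun l => fun i => C i l) := by
    rw [colSpace, Submodule.span_le]
    rintro _ ⟨q, rfl⟩
    show (fun i => M i q) ∈ _
    have : (fun i => M i q) = ∑ l, (op (W l q)) • (fun i => C i l) := by
      funext i
      rw [hM]
      simp only [Matrix.mul_apply, Finset.sum_apply, Pi.smul_apply, op_smul_eq_mul]
    rw [this]
    exact Submodule.sum_mem _ (fun l _ =>
      Submodule.smul_mem _ _ (Submodule.subset_span (Set.mem_range_self l)))
  haveI := fd_span_range (R := Bᵐᵒᵖ) (fun l => fun i => C i l)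
  exact le_trans (Submodule.finrank_mono hle) (finrank_span_range_le _)

lemma rowSpace_rank_le_of_factor {r : ℕ} (C : Matrix (Fin k) (Fin r) B)
    (W : Matrix (Fin r) (Fin k) B) (hM : M = C * W) :
    finrank B (rowSpace M) ≤ r := by
  classical
  have hle : rowSpace M ≤ Submodule.span B (Set.range fun l => W l) := by
    rw [rowSpace, Submodule.span_le]
    rintro _ ⟨i, rfl⟩
    show M i ∈ _
    have : M i = ∑ l, (C i l) • W l := by
      funext q
      rw [hM]
      simp only [Matrix.mul_apply, Finset.sum_apply, Pi.smul_apply, smul_eq_mul]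
    rw [this]
    exact Submodule.sum_mem _ (fun l _ =>
      Submodule.smul_mem _ _ (Submodule.subset_span (Set.mem_range_self l)))
  haveI := fd_span_range (R := B) (fun l => W l)
  exact le_trans (Submodule.finrank_mono hle) (finrank_span_range_le _)

/-- factorization coming from a basis of the row space. -/
lemma exists_row_factor :
    ∃ C : Matrix (Fin k) (Fin (finrank B (rowSpace M))) B,
      ∃ W : Matrix (Fin (finrank B (rowSpace M))) (Fin k) B, M = C * W := by
  classical
  haveI : FiniteDimensional B (rowSpace M) := fd_span_range _
  let bas := Module.finBasis B (rowSpace M)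
  refine ⟨fun i l => bas.repr ⟨M i, Submodule.subset_span (Set.mem_range_self i)⟩ l,
    fun l q => (bas l : Fin k → B) q, ?_⟩
  funext i q
  have hrepr := bas.sum_repr ⟨M i, Submodule.subset_span (Set.mem_range_self i)⟩
  have hco := congrArg (Subtype.val) hrepr
  simp only [AddSubmonoidClass.coe_finset_sum, SetLike.val_smul] at hco
  change M i q = ∑ l, (bas.repr ⟨M i, Submodule.subset_span (Set.mem_range_self i)⟩) l * (bas l : Fin k → B) q
  have := congrFun hco.symm q
  simpa using this

lemma exists_col_factor :
    ∃ C : Matrix (Fin k) (Fin (finrank Bᵐᵒᵖ (colSpace M))) B,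
      ∃ W : Matrix (Fin (finrank Bᵐᵒᵖ (colSpace M))) (Fin k) B, M = C * W := by
  classical
  haveI : FiniteDimensional Bᵐᵒᵖ (colSpace M) := fd_span_range _
  let bas := Module.finBasis Bᵐᵒᵖ (colSpace M)
  refine ⟨fun i l => (bas l : Fin k → B) i,
    fun l q => unop (bas.repr ⟨fun i => M i q, Submodule.subset_span (Set.mem_range_self q)⟩ l), ?_⟩
  funext i q
  have hrepr := bas.sum_repr ⟨fun i => M i q, Submodule.subset_span (Set.mem_range_self q)⟩
  have hco := congrArg (Subtype.val) hrepr
  simp only [AddSubmonoidClass.coe_finset_sum, SetLike.val_smul] at hco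
  change M i q = ∑ l, (bas l : Fin k → B) i * unop (bas.repr ⟨fun i => M i q, Submodule.subset_span (Set.mem_range_self q)⟩ l)
  have h3 := congrFun hco.symm i
  simp only [Finset.sum_apply, Pi.smul_apply] at h3
  have h4 : (M i q : B) = ∑ x, (bas.repr ⟨fun i => M i q, Submodule.subset_span (Set.mem_range_self q)⟩) x • ((bas x : Fin k → B) i) := by
    simpa using h3
  rw [h4]
  apply Finset.sum_congr rfl
  intro l _
  set c := (bas.repr ⟨fun i => M i q, Submodule.subset_span (Set.mem_range_self q)⟩) l with hc
  obtain ⟨u, hu⟩ : ∃ u, c = op u := ⟨unop c, rfl⟩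
  rw [hu, op_smul_eq_mul, unop_op]

lemma exists_row_factor_basis (M : Matrix (Fin k) (Fin k) B) :
    ∃ C : Matrix (Fin k) (Fin (finrank B (rowSpace M))) B,
      ∃ W : Matrix (Fin (finrank B (rowSpace M))) (Fin k) B,
        M = C * W ∧ LinearIndependent B (fun l => W l) ∧
        ∃ Vt : Matrix (Fin (finrank B (rowSpace M))) (Fin k) B, W = Vt * M := by
  classical
  haveI : FiniteDimensional B (rowSpace M) := fd_span_range _
  let bas := Module.finBasis B (rowSpace M)
  refine ⟨fun i l => bas.repr ⟨M i, Submodule.subset_span (Set.mem_range_self i)⟩ l,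
    fun l q => (bas l : Fin k → B) q, ?_, ?_, ?_⟩
  · funext i q
    have hrepr := bas.sum_repr ⟨M i, Submodule.subset_span (Set.mem_range_self i)⟩
    have hco := congrArg (Subtype.val) hrepr
    simp only [AddSubmonoidClass.coe_finset_sum, SetLike.val_smul] at hco
    change M i q = ∑ l, (bas.repr ⟨M i, Submodule.subset_span (Set.mem_range_self i)⟩) l * (bas l : Fin k → B) q
    have := congrFun hco.symm q
    simpa using this
  · have heq : (fun l => (fun q => (bas l : Fin k → B) q)) = ((rowSpace M).subtype ∘ bas) := by
      funext l
      rfl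
    rw [heq]
    exact bas.linearIndependent.map' (rowSpace M).subtype (Submodule.ker_subtype _)
  · have hmem : ∀ l, (bas l : Fin k → B) ∈ Submodule.span B (Set.range fun i => M i) :=
      fun l => (bas l).2
    choose cf hcf using fun l => (Submodule.mem_span_range_iff_exists_fun B).mp (hmem l)
    refine ⟨fun l i => cf l i, ?_⟩
    funext l q
    have := congrFun (hcf l) q
    change (bas l : Fin k → B) q = ∑ i, cf l i * M i q
    simp only [Finset.sum_apply, Pi.smul_apply, smul_eq_mul] at this
    exact this.symm

/-- row rank equals column rank. -/
lemma rowrank_eq_colrank : finrank B (rowSpace M) = finrank Bᵐᵒᵖ (colSpace M) := by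
  obtain ⟨C, W, hCW⟩ := exists_row_factor M
  obtain ⟨C', W', hCW'⟩ := exists_col_factor M
  exact le_antisymm (rowSpace_rank_le_of_factor M C' W' hCW')
    (colSpace_rank_le_of_factor M C W hCW)

/-- `mulVec` as a `Bᵐᵒᵖ`-linear map. -/
noncomputable def mvLin : (Fin k → B) →ₗ[Bᵐᵒᵖ] (Fin k → B) where
  toFun := fun v i => ∑ j, M i j * v j
  map_add' := by
    intro v w
    funext i
    simp [mul_add, Finset.sum_add_distrib]
  map_smul' := by
    intro c v
    obtain ⟨u, rfl⟩ : ∃ u, c = op u := ⟨unop c, rfl⟩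
    funext i
    simp only [RingHom.id_apply, Pi.smul_apply, op_smul_eq_mul]
    rw [Finset.sum_mul]
    apply Finset.sum_congr rfl
    intro j _
    rw [mul_assoc]

lemma range_mvLin : LinearMap.range (mvLin M) = colSpace M := by
  apply le_antisymm
  · rintro _ ⟨v, rfl⟩
    have : (mvLin M) v = ∑ j, (op (v j)) • (fun i => M i j) := by
      funext i
      simp [mvLin, op_smul_eq_mul]
    rw [this]
    exact Submodule.sum_mem _ (fun j _ =>
      Submodule.smul_mem _ _ (Submodule.subset_span (Set.mem_range_self j)))
  · rw [colSpace, Submodule.span_le]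
    rintro _ ⟨q, rfl⟩
    refine ⟨fun j => if j = q then 1 else 0, ?_⟩
    funext i
    simp [mvLin]

lemma finrank_colSpace_add : finrank Bᵐᵒᵖ (colSpace M) + finrank Bᵐᵒᵖ (LinearMap.ker (mvLin M)) = k := by
  haveI : Module.Finite Bᵐᵒᵖ B := finite_op
  haveI : FiniteDimensional Bᵐᵒᵖ (Fin k → B) := by infer_instance
  have := LinearMap.finrank_range_add_finrank_ker (mvLin M)
  rw [range_mvLin, finrank_op_fun] at this
  exact this

lemma finrank_colSpace_le : finrank Bᵐᵒᵖ (colSpace M) ≤ k :=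
  le_trans (Nat.le_add_right _ _) (le_of_eq (finrank_colSpace_add M))

/-- The right ideal `M · M_k(B)` as spanned set, with its `Bᵐᵒᵖ`-dimension `k * colrank`. -/
lemma finrank_span_mul_right :
    finrank Bᵐᵒᵖ (Submodule.span Bᵐᵒᵖ (Set.range fun X : Matrix (Fin k) (Fin k) B => M * X))
      = k * finrank Bᵐᵒᵖ (colSpace M) := by
  classical
  haveI : Module.Finite Bᵐᵒᵖ B := finite_op
  -- the Ξ map
  let Xi : (Fin k → (Fin k → B)) →ₗ[Bᵐᵒᵖ] Matrix (Fin k) (Fin k) B :=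
    { toFun := fun v => Matrix.of (fun i q => ∑ j, M i j * v q j)
      map_add' := by
        intro v w
        funext i q
        simp [mul_add, Finset.sum_add_distrib]
      map_smul' := by
        intro c v
        obtain ⟨u, rfl⟩ : ∃ u, c = op u := ⟨unop c, rfl⟩
        funext i q
        simp only [RingHom.id_apply, Matrix.of_apply, Pi.smul_apply, op_smul_eq_mul,
          Matrix.smul_apply]
        rw [Finset.sum_mul]
        apply Finset.sum_congr rfl
        intro j _
        rw [mul_assoc]
    }
  have hrange : LinearMap.range Xi
      = Submodule.span Bᵐᵒᵖ (Set.range fun X : Matrix (Fin k) (Fin k) B => M * X) := by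
    apply le_antisymm
    · rintro _ ⟨v, rfl⟩
      apply Submodule.subset_span
      refine ⟨Matrix.of (fun j q => v q j), ?_⟩
      funext i q
      simp [Xi, Matrix.mul_apply]
      rfl
    · rw [Submodule.span_le]
      rintro _ ⟨X, rfl⟩
      refine ⟨fun q j => X j q, ?_⟩
      funext i q
      simp [Xi, Matrix.mul_apply]
      rfl
  -- kernel of Ξ is (Fin k → ker mvLin)
  let eker : (LinearMap.ker Xi) ≃ₗ[Bᵐᵒᵖ] (Fin k → LinearMap.ker (mvLin M)) :=
    { toFun := fun v q => ⟨v.1 q, by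
        have hv := v.2
        rw [LinearMap.mem_ker] at hv ⊢
        funext i
        exact congrFun (congrFun hv i) q⟩
      invFun := fun u => ⟨fun q => (u q).1, by
        rw [LinearMap.mem_ker]
        funext i q
        have := (u q).2
        rw [LinearMap.mem_ker] at this
        exact congrFun this i⟩
      left_inv := fun v => rfl
      right_inv := fun u => rfl
      map_add' := fun v w => rfl
      map_smul' := fun c v => rfl }
  have hkerrank : finrank Bᵐᵒᵖ (LinearMap.ker Xi) = k * finrank Bᵐᵒᵖ (LinearMap.ker (mvLin M)) := by
    rw [eker.finrank_eq, finrank_pi_fintype]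
    simp [Finset.sum_const, Fintype.card_fin]
  have hrn := LinearMap.finrank_range_add_finrank_ker Xi
  rw [hrange, hkerrank, finrank_op_fun2] at hrn
  have hcs := finrank_colSpace_add M
  -- conclude by arithmetic
  nlinarith [hrn, hcs]

end MatrixRank

namespace SkewPaper

section Assembly

variable {K Rg : Type*} [Field K] [Ring Rg] {k : ℕ} {B : Type*} [DivisionRing B]

/-- The left `K`-module structure on `k × ξ` matrices over `B` induced by `π ∘ ι`. -/
noncomputable def KMod (S : SkewPolyData K Rg) (π : Rg →+* Matrix (Fin k) (Fin k) B)
    (ξ : Type*) : Module K (Matrix (Fin k) ξ B) where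
  smul := fun c X => π (S.ι c) * X
  one_smul := fun X => by
    show π (S.ι 1) * X = X
    rw [map_one, map_one, Matrix.one_mul]
  mul_smul := fun c d X => by
    show π (S.ι (c * d)) * X = π (S.ι c) * (π (S.ι d) * X)
    rw [map_mul, map_mul, Matrix.mul_assoc]
  smul_zero := fun c => Matrix.mul_zero _
  smul_add := fun c X Y => Matrix.mul_add _ X Y
  add_smul := fun c d X => by
    show π (S.ι (c + d)) * X = π (S.ι c) * X + π (S.ι d) * X
    rw [map_add, map_add, Matrix.add_mul]
  zero_smul := fun X => by
    show π (S.ι 0) * X = 0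
    rw [map_zero, map_zero, Matrix.zero_mul]

variable (S : SkewPolyData K Rg) (π : Rg →+* Matrix (Fin k) (Fin k) B)

lemma smul_def_KMod (ξ : Type*) (c : K) (X : Matrix (Fin k) ξ B) :
    (letI := KMod S π ξ; c • X) = π (S.ι c) * X := rfl

/-- The family `π (t^i)`, `i < deg h`, is a `K`-basis of `M_k(B)`. -/
lemma basis_V (h : Rg) (hker : ∀ x : Rg, π x = 0 ↔ ∃ c, x = c * h)
    (hsurj : Function.Surjective π) (hh : h ≠ 0) :
    letI := KMod S π (Fin k)
    (LinearIndependent K (fun i : Fin (S.deg h) => π (S.t ^ (i : ℕ)))) ∧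
    (⊤ : Submodule K (Matrix (Fin k) (Fin k) B)) ≤
      Submodule.span K (Set.range (fun i : Fin (S.deg h) => π (S.t ^ (i : ℕ)))) := by
  letI := KMod S π (Fin k)
  classical
  set N := S.deg h with hN
  constructor
  · rw [Fintype.linearIndependent_iff]
    intro c hc i
    set c' : ℕ → K := fun j => if hj : j < N then c ⟨j, hj⟩ else 0 with hc'
    set z := ∑ j ∈ Finset.range N, S.ι (c' j) * S.t ^ j with hz
    have hπz : π z = 0 := by
      rw [hz, map_sum]
      rw [← hc]
      rw [← Fin.sum_univ_eq_sum_range (fun j => π (S.ι (c' j) * S.t ^ j)) N]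
      apply Finset.sum_congr rfl
      intro i _
      rw [smul_def_KMod, ← map_mul]
      congr 2
      rw [hc']
      simp [i.2]
    obtain ⟨cc, hcc⟩ := (hker z).mp hπz
    have hvanish := S.low_coeffs_zero hh (le_of_eq hN.symm) (hz ▸ hcc)
    have := hvanish i (by omega)
    rw [hc'] at this
    simpa [i.2] using this
  · intro X _
    obtain ⟨x, rfl⟩ := hsurj X
    obtain ⟨q, r, hqr, hr⟩ := S.divmod h hh x
    have hπh : π h = 0 := (hker h).mpr ⟨1, (one_mul h).symm⟩
    have hπx : π x = π r := by
      rw [hqr, map_add, map_mul, hπh, mul_zero, zero_add]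
    have hrrep : r = ∑ j ∈ Finset.range N, S.ι (S.coeff r j) * S.t ^ j := by
      apply S.repr' r
      intro i hi
      rcases hr with hr0 | hrlt
      · rw [hr0, S.coeff_zero] at hi; exact absurd rfl hi
      · exact Finset.mem_range.mpr (by have := S.support_le_deg hi; omega)
    rw [hπx, Submodule.mem_span_range_iff_exists_fun]
    refine ⟨fun i => S.coeff r (i : ℕ), ?_⟩
    conv_rhs => rw [hrrep]
    rw [map_sum, ← Fin.sum_univ_eq_sum_range (fun j => π (S.ι (S.coeff r j) * S.t ^ j)) N]
    apply Finset.sum_congr rfl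
    intro i _
    rw [smul_def_KMod, ← map_mul]

lemma finrank_V (h : Rg) (hker : ∀ x : Rg, π x = 0 ↔ ∃ c, x = c * h)
    (hsurj : Function.Surjective π) (hh : h ≠ 0) :
    letI := KMod S π (Fin k)
    finrank K (Matrix (Fin k) (Fin k) B) = S.deg h := by
  letI := KMod S π (Fin k)
  obtain ⟨hli, hsp⟩ := basis_V S π h hker hsurj hh
  rw [finrank_eq_card_basis (Basis.mk hli hsp), Fintype.card_fin]

lemma finite_V (h : Rg) (hker : ∀ x : Rg, π x = 0 ↔ ∃ c, x = c * h)
    (hsurj : Function.Surjective π) (hh : h ≠ 0) :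
    letI := KMod S π (Fin k)
    Module.Finite K (Matrix (Fin k) (Fin k) B) := by
  letI := KMod S π (Fin k)
  obtain ⟨hli, hsp⟩ := basis_V S π h hker hsurj hh
  exact Module.Finite.of_basis (Basis.mk hli hsp)

lemma finrank_mat_cols (j : ℕ)
    (hfd : letI := KMod S π (Fin 1); Module.Finite K (Matrix (Fin k) (Fin 1) B)) :
    (letI := KMod S π (Fin j); finrank K (Matrix (Fin k) (Fin j) B))
      = j * (letI := KMod S π (Fin 1); finrank K (Matrix (Fin k) (Fin 1) B)) := by
  letI i1 := KMod S π (Fin 1)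
  letI ij := KMod S π (Fin j)
  haveI := hfd
  let e : Matrix (Fin k) (Fin j) B ≃ₗ[K] (Fin j → Matrix (Fin k) (Fin 1) B) :=
    { toFun := fun X q => Matrix.of (fun i _ => X i q)
      invFun := fun u => Matrix.of (fun i q => u q i 0)
      left_inv := fun X => rfl
      right_inv := fun u => by
        funext q i l
        have hl : l = 0 := Subsingleton.elim l 0
        rw [hl]
        rfl
      map_add' := fun X Y => rfl
      map_smul' := fun c X => by
        funext q i l
        show (π (S.ι c) * X) i q = (π (S.ι c) * (Matrix.of (fun i _ => X i q))) i l
        simp only [Matrix.mul_apply, Matrix.of_apply]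
      }
  rw [e.finrank_eq, finrank_pi_fintype, Finset.sum_const, Finset.card_univ, Fintype.card_fin,
    smul_eq_mul]

lemma finite_mat_cols (j : ℕ)
    (hfd : letI := KMod S π (Fin 1); Module.Finite K (Matrix (Fin k) (Fin 1) B)) :
    letI := KMod S π (Fin j); Module.Finite K (Matrix (Fin k) (Fin j) B) := by
  letI i1 := KMod S π (Fin 1)
  letI ij := KMod S π (Fin j)
  haveI := hfd
  let e : Matrix (Fin k) (Fin j) B ≃ₗ[K] (Fin j → Matrix (Fin k) (Fin 1) B) :=
    { toFun := fun X q => Matrix.of (fun i _ => X i q)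
      invFun := fun u => Matrix.of (fun i q => u q i 0)
      left_inv := fun X => rfl
      right_inv := fun u => by
        funext q i l
        have hl : l = 0 := Subsingleton.elim l 0
        rw [hl]
        rfl
      map_add' := fun X Y => rfl
      map_smul' := fun c X => by
        funext q i l
        show (π (S.ι c) * X) i q = (π (S.ι c) * (Matrix.of (fun i _ => X i q))) i l
        simp only [Matrix.mul_apply, Matrix.of_apply]
      }
  exact Module.Finite.equiv e.symm

lemma key (hk : 0 < k) (m : ℕ) (hm : 0 < m) (h : Rg) (hdegh : S.deg h = k * m)
    (hker : ∀ x : Rg, π x = 0 ↔ ∃ c, x = c * h) (hsurj : Function.Surjective π)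
    (a g : Rg) (hgcrd : IsGcrd a h g) :
    finrank Bᵐᵒᵖ (Submodule.span Bᵐᵒᵖ
        (Set.range fun X : Matrix (Fin k) (Fin k) B => π a * X))
      = k ^ 2 - k * S.deg g / m ∧
    finrank Bᵐᵒᵖ (colSpace (π a)) = k - S.deg g / m := by
  classical
  letI instV := KMod S π (Fin k)
  letI inst1 := KMod S π (Fin 1)
  -- basic skew polynomial facts
  have hh : h ≠ 0 := by
    intro h0
    rw [h0, S.deg_zero] at hdegh
    have := Nat.mul_pos hk hm
    omega
  obtain ⟨qa, hqa⟩ := hgcrd.1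
  obtain ⟨q₀, hq₀⟩ := hgcrd.2.1
  have hg : g ≠ 0 := fun h0 => hh (by rw [hq₀, h0, mul_zero])
  have hq₀ne : q₀ ≠ 0 := fun h0 => hh (by rw [hq₀, h0, zero_mul])
  have hdegsum : S.deg h = S.deg q₀ + S.deg g := by
    conv_lhs => rw [hq₀]
    exact S.deg_mul hq₀ne hg
  obtain ⟨xg, yg, hbez⟩ := S.bezout hh hgcrd
  have hπh : π h = 0 := (hker h).mpr ⟨1, (one_mul h).symm⟩
  -- the right-multiplication-by-π a map and its range I
  let rmulA : Matrix (Fin k) (Fin k) B →ₗ[K] Matrix (Fin k) (Fin k) B :=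
    { toFun := fun X => X * π a
      map_add' := fun X Y => Matrix.add_mul X Y (π a)
      map_smul' := fun c X => by
        show (π (S.ι c) * X) * π a = π (S.ι c) * (X * π a)
        rw [Matrix.mul_assoc] }
  set N' := S.deg q₀ with hN'
  set v' : Fin N' → Matrix (Fin k) (Fin k) B := fun i => π (S.t ^ (i : ℕ) * g) with hv'
  have hmemI : ∀ i : ℕ, π (S.t ^ i * g) ∈ LinearMap.range rmulA := by
    intro i
    refine ⟨π (S.t ^ i * xg), ?_⟩
    show π (S.t ^ i * xg) * π a = π (S.t ^ i * g)
    rw [← map_mul]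
    have he : S.t ^ i * g = S.t ^ i * xg * a + (S.t ^ i * yg) * h := by
      rw [hbez]; noncomm_ring
    have hz2 : π ((S.t ^ i * yg) * h) = 0 := by
      rw [map_mul, hπh, mul_zero]
    rw [he, map_add, hz2, add_zero, map_mul]
  have hspanle : Submodule.span K (Set.range v') ≤ LinearMap.range rmulA := by
    rw [Submodule.span_le]
    rintro _ ⟨i, rfl⟩
    exact hmemI i
  have hIle : LinearMap.range rmulA ≤ Submodule.span K (Set.range v') := by
    rintro _ ⟨X, rfl⟩
    obtain ⟨x, rfl⟩ := hsurj X
    show π x * π a ∈ _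
    obtain ⟨cdiv, d, hdq, hd⟩ := S.divmod q₀ hq₀ne (x * qa)
    have hxa : x * a = (x * qa) * g := by rw [hqa]; noncomm_ring
    have hply : π x * π a = π (d * g) := by
      rw [← map_mul, hxa, hdq]
      have he : (cdiv * q₀ + d) * g = cdiv * h + d * g := by rw [hq₀]; noncomm_ring
      rw [he, map_add, map_mul, hπh, mul_zero, zero_add]
    rw [hply]
    have hdrep : d = ∑ j ∈ Finset.range N', S.ι (S.coeff d j) * S.t ^ j := by
      apply S.repr'
      intro i hi
      rcases hd with h0 | hlt
      · rw [h0, S.coeff_zero] at hi; exact absurd rfl hi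
      · exact Finset.mem_range.mpr (by have := S.support_le_deg hi; omega)
    rw [Submodule.mem_span_range_iff_exists_fun]
    refine ⟨fun i => S.coeff d (i : ℕ), ?_⟩
    have he2 : d * g = ∑ j ∈ Finset.range N', (S.ι (S.coeff d j) * (S.t ^ j * g)) := by
      conv_lhs => rw [hdrep]
      rw [Finset.sum_mul]
      exact Finset.sum_congr rfl (fun j _ => mul_assoc _ _ _)
    rw [he2, map_sum,
      ← Fin.sum_univ_eq_sum_range (fun j => π (S.ι (S.coeff d j) * (S.t ^ j * g))) N']
    apply Finset.sum_congr rfl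
    intro i _
    rw [map_mul]
    rfl
  have hspan : Submodule.span K (Set.range v') = LinearMap.range rmulA :=
    le_antisymm hspanle hIle
  have hli : LinearIndependent K v' := by
    rw [Fintype.linearIndependent_iff]
    intro c hc
    set c' : ℕ → K := fun j => if hj : j < N' then c ⟨j, hj⟩ else 0 with hc'
    set z := ∑ j ∈ Finset.range N', S.ι (c' j) * S.t ^ j with hz
    have hπzg : π (z * g) = 0 := by
      have e1 : z * g = ∑ j ∈ Finset.range N', S.ι (c' j) * (S.t ^ j * g) := by
        rw [hz, Finset.sum_mul]
        exact Finset.sum_congr rfl (fun j _ => mul_assoc _ _ _)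
      rw [e1, map_sum,
        ← Fin.sum_univ_eq_sum_range (fun j => π (S.ι (c' j) * (S.t ^ j * g))) N']
      refine Eq.trans ?_ hc
      apply Finset.sum_congr rfl
      intro i _
      rw [map_mul]
      show π (S.ι (c' (i : ℕ))) * π (S.t ^ (i : ℕ) * g) = c i • v' i
      have : c' (i : ℕ) = c i := by rw [hc']; simp [i.2]
      rw [this]
      rfl
    obtain ⟨cc, hcc⟩ := (hker _).mp hπzg
    have hzeq : z = cc * q₀ := by
      apply S.mul_cancel_right hg
      rw [hcc, hq₀]
      noncomm_ring
    have hvan := S.low_coeffs_zero hq₀ne (le_of_eq hN') (hz ▸ hzeq)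
    intro i
    have := hvan (i : ℕ) i.2
    rw [hc'] at this
    simpa [i.2] using this
  have hIfr1 : finrank K (LinearMap.range rmulA) = N' := by
    rw [← hspan, finrank_span_eq_card hli, Fintype.card_fin]
  -- finite-dimensionality setup
  haveI hfinV : Module.Finite K (Matrix (Fin k) (Fin k) B) := finite_V S π h hker hsurj hh
  set q0 : Fin k := ⟨0, hk⟩ with hq0def
  set E0 : Matrix (Fin 1) (Fin k) B := fun _ q => if q = q0 then 1 else 0 with hE0
  let ψ : Matrix (Fin k) (Fin 1) B →ₗ[K] Matrix (Fin k) (Fin k) B :=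
    { toFun := fun C => C * E0
      map_add' := fun X Y => Matrix.add_mul X Y E0
      map_smul' := fun c X => by
        show (π (S.ι c) * X) * E0 = π (S.ι c) * (X * E0)
        rw [Matrix.mul_assoc] }
  have hx0 : ∀ Z : Matrix (Fin k) (Fin 1) B, ∀ i, (Z * E0) i q0 = Z i 0 := by
    intro Z i
    rw [Matrix.mul_apply, Fin.sum_univ_one, hE0]
    simp
  have hψinj : Function.Injective ψ := by
    intro X Y hXY
    funext i l
    have hl : l = 0 := Subsingleton.elim l 0
    have hXY' : (X * E0) i q0 = (Y * E0) i q0 := congrFun (congrFun hXY i) q0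
    rw [hx0 X i, hx0 Y i] at hXY'
    rw [hl]
    exact hXY' 
  haveI hfd1 : Module.Finite K (Matrix (Fin k) (Fin 1) B) :=
    Module.Finite.of_injective ψ hψinj
  set d1 := finrank K (Matrix (Fin k) (Fin 1) B) with hd1def
  have hVd : finrank K (Matrix (Fin k) (Fin k) B) = k * d1 := finrank_mat_cols S π k hfd1
  have hVfr : finrank K (Matrix (Fin k) (Fin k) B) = S.deg h := finrank_V S π h hker hsurj hh
  have hd1 : d1 = m := by
    have hkk : k * d1 = k * m := by rw [← hVd, hVfr, hdegh]
    exact Nat.eq_of_mul_eq_mul_left hk hkk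
  -- the Φ map from the row-space factorization
  set rr := finrank B (rowSpace (π a)) with hrrdef
  obtain ⟨C, W, hfac, hWli, Vt, hVt⟩ := exists_row_factor_basis (π a)
  letI instrr := KMod S π (Fin rr)
  haveI hfdrr : Module.Finite K (Matrix (Fin k) (Fin rr) B) := finite_mat_cols S π rr hfd1
  let Φ : Matrix (Fin k) (Fin rr) B →ₗ[K] Matrix (Fin k) (Fin k) B :=
    { toFun := fun C' => C' * W
      map_add' := fun X Y => Matrix.add_mul X Y W
      map_smul' := fun c X => by
        show (π (S.ι c) * X) * W = π (S.ι c) * (X * W)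
        rw [Matrix.mul_assoc] }
  have hΦinj : Function.Injective Φ := by
    intro X Y hXY
    have hsub : (X - Y) * W = 0 := by
      rw [Matrix.sub_mul]
      show Φ X - Φ Y = 0
      rw [hXY, sub_self]
    funext i l
    have hrow : ∑ lw, (X - Y) i lw • W lw = 0 := by
      funext q
      have := congrFun (congrFun hsub i) q
      rw [Matrix.mul_apply] at this
      simpa [Finset.sum_apply] using this
    have := Fintype.linearIndependent_iff.mp hWli (fun lw => (X - Y) i lw) hrow l
    have hXYil : X i l - Y i l = 0 := by simpa using this
    exact sub_eq_zero.mp hXYil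
  have hΦrange : LinearMap.range Φ = LinearMap.range rmulA := by
    apply le_antisymm
    · rintro _ ⟨C', rfl⟩
      refine ⟨C' * Vt, ?_⟩
      show (C' * Vt) * π a = C' * W
      rw [Matrix.mul_assoc, ← hVt]
    · rintro _ ⟨X, rfl⟩
      refine ⟨X * C, ?_⟩
      show (X * C) * W = X * π a
      rw [Matrix.mul_assoc, ← hfac]
  have hIfr2 : finrank K (LinearMap.range rmulA) = rr * d1 := by
    rw [← hΦrange, LinearMap.finrank_range_of_inj hΦinj]
    exact finrank_mat_cols S π rr hfd1
  -- numerics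
  have hmain : rr * m + S.deg g = k * m := by
    have e1 : rr * m = N' := by
      rw [← hd1]
      exact hIfr2.symm.trans hIfr1
    rw [e1, ← hdegh, hdegsum]
  have hrrk : rr ≤ k := by
    have h1 := Submodule.finrank_le (rowSpace (π a))
    rwa [finrank_fun] at h1
  have hdegg : S.deg g = (k - rr) * m := by
    rw [Nat.sub_mul]
    omega
  have hdiv : S.deg g / m = k - rr := by
    rw [hdegg, Nat.mul_div_cancel _ hm]
  have hcol : finrank Bᵐᵒᵖ (colSpace (π a)) = rr := (rowrank_eq_colrank (π a)).symm
  constructor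
  · rw [finrank_span_mul_right (π a), hcol]
    have e2 : k * S.deg g / m = k * (k - rr) := by
      rw [hdegg, ← Nat.mul_assoc, Nat.mul_div_cancel _ hm]
    rw [e2]
    have e3 : k * (k - rr) + k * rr = k ^ 2 := by
      rw [← Nat.mul_add]
      have : k - rr + rr = k := by omega
      rw [this, pow_two]
    omega
  · rw [hcol, hdiv]
    omega

end Assembly

end SkewPaper


open SkewPaper

/-- Let `K/F` be a cyclic field extension with `Gal(K/F) = ⟨σ⟩` of order
`n`, `R = K[t;σ]`, and `f ∈ R` monic irreducible of degree `m > 1` with `gcrd(f,t) = 1` and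
minimal central left multiple `h(t) = ĥ(tⁿ)` of degree `km`, with `B = Nuc_r(S_f)` and
`Ψ : R/Rh ≅ M_k(B)` (presented as a surjective ring homomorphism `π` with kernel `Rh`),
`Ψ(a + Rh) = M_a`. Then for all `a + Rh ∈ R/Rh`:
`dim_B(im(L_{M_a})) = k² − (k/m)·deg(gcrd(a,h))` and
`colrank(M_a) = k − (1/m)·deg(gcrd(a,h))`. In particular, if `deg(h) = mn` then
`M_a ∈ M_n(E_ĥ)` and `rank(M_a) = n − (1/m)·deg(gcrd(a,h))`. -/
theorem colrank_eq_k_sub_deg_gcrd_div_m_field_case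
    {F K Rg : Type*} [Field F] [Field K] [Algebra F K] [IsGalois F K] [FiniteDimensional F K]
    (n : ℕ) (hn : Module.finrank F K = n)
    (σg : K ≃ₐ[F] K) (hgen : ∀ τ : K ≃ₐ[F] K, τ ∈ Subgroup.zpowers σg) (hordσ : orderOf σg = n)
    [Ring Rg] (S : SkewPolyData K Rg) (hσ : ∀ a : K, S.σ a = σg a)
    (f : Rg) (m : ℕ) (hm : 1 < m) (hdegf : S.deg f = m) (hmonic : S.Monic f)
    (hirr : S.Irred f) (hcop : S.CoprimeT f)
    (h : Rg) (hh : Polynomial F) (hmclm : S.IsMclm n 1 (algebraMap F K) f h hh)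
    (k : ℕ) (hk : S.FactorsIntoIrred h k) (hdegh : S.deg h = k * m)
    (B : Type*) [DivisionRing B] (π : Rg →+* Matrix (Fin k) (Fin k) B)
    (hker : ∀ x : Rg, π x = 0 ↔ ∃ c, x = c * h) (hsurj : Function.Surjective π) :
    (S.deg h = m * n → k = n) ∧
    ∀ a g : Rg, IsGcrd a h g →
      Module.finrank Bᵐᵒᵖ (Submodule.span Bᵐᵒᵖ
          (Set.range fun X : Matrix (Fin k) (Fin k) B => π a * X))
        = k ^ 2 - k * S.deg g / m ∧
      colrank (π a) = k - S.deg g / m := by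
  classical
  constructor
  · intro hd
    have hm0 : 0 < m := by omega
    have he : k * m = n * m := by rw [← hdegh, hd, Nat.mul_comm]
    exact Nat.eq_of_mul_eq_mul_right hm0 he
  · intro a g hg
    rcases Nat.eq_zero_or_pos k with hk0 | hk
    · subst hk0
      haveI h1 : Subsingleton (Matrix (Fin 0) (Fin 0) B) :=
        ⟨fun X Y => funext fun i => i.elim0⟩
      haveI h2 : Subsingleton (Fin 0 → B) := ⟨fun x y => funext fun i => i.elim0⟩
      constructor
      · haveI : Subsingleton
            ↥(Submodule.span Bᵐᵒᵖ (Set.range fun X : Matrix (Fin 0) (Fin 0) B => π a * X)) :=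
          ⟨fun x y => Subtype.ext (Subsingleton.elim _ _)⟩
        rw [Module.finrank_zero_of_subsingleton]
        simp
      · haveI : Subsingleton
            ↥(Submodule.span Bᵐᵒᵖ (Set.range fun j : Fin 0 => fun i : Fin 0 => (π a) i j)) :=
          ⟨fun x y => Subtype.ext (Subsingleton.elim _ _)⟩
        rw [colrank, Module.finrank_zero_of_subsingleton]
        simp
    · have hm0 : 0 < m := by omega
      exact key S π hk m hm0 h hdegh hker hsurj a g hg
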